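/- Let λ, μ, A, B be real numbers, let ξ¹, ξ² ∈ ℝ³ be linearly independent unit vectors, set ξ^P = ξ¹ + ξ², and let H(p¹, p²) be the S–S interaction symbol scalar. Let p¹, p² ∈ ℝ³ be unit vectors in the plane spanned by ξ¹ and ξ² with p¹·ξ¹ = 0, p²·ξ² = 0, p¹·ξ² ≥ 0, and p²·ξ¹ ≤ 0, and define α = arccos(ξ¹·ξ²). Then H(p¹, p²) = |ξ^P|²·[(λ + 2μ + B + A/2)·cos²α − (μ + B + A/2)·sin²α]. (The P-wave output of the interaction of two in-plane polarized S waves; it is generically nonvanishing exactly when λ + 2μ + B + A/2 ≠ 0 or μ + B + A/2 ≠ 0.) -/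
import Mathlib


open Real

/-- Euclidean dot product on ℝ³. -/
def dot (x y : Fin 3 → ℝ) : ℝ := ∑ i, x i * y i

/-- The S–S interaction symbol scalar H(p¹, p²) for two S waves with covectors
ξ¹, ξ² and polarizations p¹, p². -/
noncomputable def HSS (lam mu A B : ℝ) (ξ1 ξ2 p1 p2 : Fin 3 → ℝ) : ℝ :=
  lam * dot p1 p2 * dot ξ1 ξ2 * dot (ξ1 + ξ2) (ξ1 + ξ2)
    + mu * (dot p1 (ξ1 + ξ2) * dot ξ1 ξ2 + dot ξ1 (ξ1 + ξ2) * dot p1 ξ2)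
        * dot p2 (ξ1 + ξ2)
    + mu * dot p1 p2 * dot ξ1 (ξ1 + ξ2) * dot ξ2 (ξ1 + ξ2)
    + mu * (dot p2 (ξ1 + ξ2) * dot ξ2 ξ1 + dot ξ2 (ξ1 + ξ2) * dot p2 ξ1)
        * dot p1 (ξ1 + ξ2)
    + mu * dot p1 p2 * dot ξ2 (ξ1 + ξ2) * dot ξ1 (ξ1 + ξ2)
    + (A / 2) * (dot p1 (ξ1 + ξ2) * dot p2 (ξ1 + ξ2) * dot ξ1 ξ2
      + dot p1 (ξ1 + ξ2) * dot ξ2 (ξ1 + ξ2) * dot ξ1 p2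
      + dot ξ1 (ξ1 + ξ2) * dot p2 (ξ1 + ξ2) * dot p1 ξ2
      + dot ξ1 (ξ1 + ξ2) * dot ξ2 (ξ1 + ξ2) * dot p1 p2)
    + B * (dot p1 p2 * dot ξ1 ξ2 + dot p1 ξ2 * dot ξ1 p2)
        * dot (ξ1 + ξ2) (ξ1 + ξ2)


lemma dot_comm' (x y : Fin 3 → ℝ) : dot x y = dot y x := by
  simp [dot, mul_comm]

lemma dot_add_right' (x y z : Fin 3 → ℝ) : dot x (y + z) = dot x y + dot x z := by
  simp [dot, Fin.sum_univ_three]; ring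

lemma dot_add_left' (x y z : Fin 3 → ℝ) : dot (x + y) z = dot x z + dot y z := by
  simp [dot, Fin.sum_univ_three]; ring

lemma dot_sm (a b : ℝ) (x y z : Fin 3 → ℝ) :
    dot (a • x + b • y) z = a * dot x z + b * dot y z := by
  simp [dot, Fin.sum_univ_three]; ring

/-- The P-wave output of the interaction of two in-plane polarized S waves. -/
theorem ss_interaction_HH (lam mu A B : ℝ) (ξ1 ξ2 : Fin 3 → ℝ)
    (hind : LinearIndependent ℝ ![ξ1, ξ2])
    (hξ1 : dot ξ1 ξ1 = 1) (hξ2 : dot ξ2 ξ2 = 1) (p1 p2 : Fin 3 → ℝ)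
    (hp1unit : dot p1 p1 = 1)
    (hp1span : p1 ∈ Submodule.span ℝ ({ξ1, ξ2} : Set (Fin 3 → ℝ)))
    (hp11 : dot p1 ξ1 = 0) (hp12 : 0 ≤ dot p1 ξ2)
    (hp2unit : dot p2 p2 = 1)
    (hp2span : p2 ∈ Submodule.span ℝ ({ξ1, ξ2} : Set (Fin 3 → ℝ)))
    (hp22 : dot p2 ξ2 = 0) (hp21 : dot p2 ξ1 ≤ 0) :
    HSS lam mu A B ξ1 ξ2 p1 p2 =
      dot (ξ1 + ξ2) (ξ1 + ξ2) *
        ((lam + 2 * mu + B + A / 2) * (Real.cos (Real.arccos (dot ξ1 ξ2))) ^ 2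
          - (mu + B + A / 2) * (Real.sin (Real.arccos (dot ξ1 ξ2))) ^ 2) := by
  obtain ⟨a, b, hab⟩ := Submodule.mem_span_pair.mp hp1span
  obtain ⟨a2, b2, hab2⟩ := Submodule.mem_span_pair.mp hp2span
  set c := dot ξ1 ξ2 with hc
  set s := dot p1 ξ2 with hs
  set t := dot p2 ξ1 with ht
  have h21 : dot ξ2 ξ1 = c := dot_comm' ξ2 ξ1
  -- p1 relations
  have e1 : a + b * c = 0 := by
    have h := hp11
    rw [← hab, dot_sm, hξ1, h21] at h
    linarith
  have e2 : s = a * c + b := by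
    rw [hs, ← hab, dot_sm, hξ2, ← hc]; ring
  have e3 : b * s = 1 := by
    have h : dot (a • ξ1 + b • ξ2) p1 = 1 := by rw [hab]; exact hp1unit
    rw [dot_sm, dot_comm' ξ1 p1, dot_comm' ξ2 p1, hp11, ← hs] at h
    linarith
  have hsb : s = b * (1 - c * c) := by linear_combination e2 + c * e1
  have hs2 : s * s = 1 - c * c := by linear_combination s * hsb + (1 - c * c) * e3
  -- p2 relations
  have f1 : a2 * c + b2 = 0 := by
    have h := hp22
    rw [← hab2, dot_sm, hξ2, ← hc] at h
    linarith
  have f2 : t = a2 + b2 * c := by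
    rw [ht, ← hab2, dot_sm, hξ1, h21]; ring
  have f3 : a2 * t = 1 := by
    have h : dot (a2 • ξ1 + b2 • ξ2) p2 = 1 := by rw [hab2]; exact hp2unit
    rw [dot_sm, dot_comm' ξ1 p2, dot_comm' ξ2 p2, hp22, ← ht] at h
    linarith
  have htb : t = a2 * (1 - c * c) := by linear_combination f2 + c * f1
  have ht2 : t * t = 1 - c * c := by linear_combination t * htb + (1 - c * c) * f3
  -- signs
  have hsne : s ≠ 0 := by
    intro h; rw [h, mul_zero] at e3; exact one_ne_zero e3.symm
  have hspos : 0 < s := lt_of_le_of_ne hp12 (Ne.symm hsne)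
  have htne : t ≠ 0 := by
    intro h; rw [h, mul_zero] at f3; exact one_ne_zero f3.symm
  have htneg : t < 0 := lt_of_le_of_ne hp21 htne
  have hts : t = -s := by
    have h0 : (t + s) * (t - s) = 0 := by linear_combination ht2 - hs2
    rcases mul_eq_zero.mp h0 with h | h
    · linarith
    · linarith
  -- the cross dot product
  have g : dot p1 p2 = b2 * s := by
    have h : dot (a2 • ξ1 + b2 • ξ2) p1 = dot p2 p1 := by rw [hab2]
    rw [dot_sm, dot_comm' ξ1 p1, dot_comm' ξ2 p1, hp11, ← hs] at h
    rw [dot_comm' p1 p2, ← h]; ring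
  have hpp : dot p1 p2 = c := by linear_combination g + s * f1 + c * f3 - a2 * c * hts
  -- trig
  have hcl : -1 ≤ c := by nlinarith [mul_self_nonneg s, mul_self_nonneg (s*s)]
  have hcu : c ≤ 1 := by nlinarith [mul_self_nonneg s, mul_self_nonneg (s*s)]
  have hcos : Real.cos (Real.arccos c) = c := Real.cos_arccos hcl hcu
  have hsin2 : Real.sin (Real.arccos c) ^ 2 = 1 - c * c := by
    rw [Real.sin_arccos, Real.sq_sqrt (by nlinarith [mul_self_nonneg s] : (0:ℝ) ≤ 1 - c ^ 2)]
    ring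
  have hxp2 : dot ξ1 p2 = t := (dot_comm' ξ1 p2).trans ht.symm
  simp only [HSS, dot_add_right', dot_add_left', hξ1, hξ2, hp11, hp22, h21, hxp2,
    hpp, ← hc, ← hs, ← ht, hcos, hsin2, hts]
  linear_combination (-(2 * mu * (1 + 2 * c)) - (A / 2) * (2 + 3 * c) - B * (2 + 2 * c)) * hs2
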